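/- arXiv:0806.3153 — 2 statements merged into one kernel-verified Lean document; each statement's English description precedes it below -/
import Mathlib

section
/- Let F = GF(q) be a finite field with q elements, R the ring of ternions over F, and n ≥ 1. The number of vectors X ∈ R^{n+1} such that the right ideal I_X generated by the coordinates of X equals the ideal I₁ of ternions with zero first column is exactly q·(q^n − 1)·(q^{n+1} − 1); consequently, the number of non-unimodular free cyclic submodules of R^{n+1} satisfies (q − 1)²·N = (q^n − 1)·(q^{n+1} − 1), i.e., N = (q^n − 1)(q^{n+1} − 1)/(q − 1)². -/
set_option synthInstance.maxHeartbeats 1000000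
set_option maxHeartbeats 1000000

/-- The ring of ternions over a field `F`: the subring of `2×2` matrices over `F`
consisting of all upper triangular matrices. -/
def ternions (F : Type) [Field F] : Subring (Matrix (Fin 2) (Fin 2) F) where
  carrier := {A | A 1 0 = 0}
  zero_mem' := by simp
  one_mem' := by simp [Matrix.one_apply]
  add_mem' := by
    intro a b ha hb
    simp only [Set.mem_setOf_eq, Matrix.add_apply] at *
    simp [ha, hb]
  neg_mem' := by
    intro a ha
    simp only [Set.mem_setOf_eq, Matrix.neg_apply] at *
    simp [ha]
  mul_mem' := by
    intro a b ha hb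
    simp only [Set.mem_setOf_eq, Matrix.mul_apply, Fin.sum_univ_two] at *
    simp [ha, hb]


namespace TernAux

variable {F : Type} [Field F]

def mk (x y z : F) : ternions F := ⟨!![x, y; 0, z], by show _ = _; simp⟩

@[simp] lemma mk00 (x y z : F) : (mk x y z).val 0 0 = x := rfl
@[simp] lemma mk01 (x y z : F) : (mk x y z).val 0 1 = y := rfl
@[simp] lemma mk11 (x y z : F) : (mk x y z).val 1 1 = z := rfl

@[simp] lemma val10 (A : ternions F) : A.val 1 0 = 0 := A.2

@[simp] lemma mul00 (A B : ternions F) : (A * B).val 0 0 = A.val 0 0 * B.val 0 0 := by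
  show (A.val * B.val) 0 0 = _
  rw [Matrix.mul_apply, Fin.sum_univ_two, val10, mul_zero, add_zero]

@[simp] lemma mul01 (A B : ternions F) :
    (A * B).val 0 1 = A.val 0 0 * B.val 0 1 + A.val 0 1 * B.val 1 1 := by
  show (A.val * B.val) 0 1 = _
  rw [Matrix.mul_apply, Fin.sum_univ_two]

@[simp] lemma mul11 (A B : ternions F) : (A * B).val 1 1 = A.val 1 1 * B.val 1 1 := by
  show (A.val * B.val) 1 1 = _
  rw [Matrix.mul_apply, Fin.sum_univ_two, val10, zero_mul, zero_add]

@[simp] lemma add_val (A B : ternions F) (i j : Fin 2) :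
    (A + B).val i j = A.val i j + B.val i j := rfl

@[simp] lemma zero_val (i j : Fin 2) : (0 : ternions F).val i j = 0 := rfl

@[simp] lemma one00 : (1 : ternions F).val 0 0 = 1 := rfl
@[simp] lemma one01 : (1 : ternions F).val 0 1 = 0 := rfl
@[simp] lemma one11 : (1 : ternions F).val 1 1 = 1 := rfl

lemma ext3 {A B : ternions F} (h0 : A.val 0 0 = B.val 0 0) (h1 : A.val 0 1 = B.val 0 1)
    (h2 : A.val 1 1 = B.val 1 1) : A = B := by
  apply Subtype.ext
  ext i j
  fin_cases i <;> fin_cases j <;> simp_all [val10]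

lemma sum_val {ι : Type*} (s : Finset ι) (f : ι → ternions F) (k l : Fin 2) :
    (∑ i ∈ s, f i).val k l = ∑ i ∈ s, (f i).val k l := by
  induction s using Finset.cons_induction with
  | empty => simp
  | cons a s ha ih => rw [Finset.sum_cons, Finset.sum_cons, add_val, ih]

lemma op_smul (r A : ternions F) : (MulOpposite.op r) • A = A * r := rfl


variable {m : ℕ}

/-- The key condition on a vector. -/
def Cond (X : Fin m → ternions F) : Prop :=
  (∀ i, (X i).val 0 0 = 0) ∧
  ∃ i j, (X i).val 0 1 * (X j).val 1 1 - (X j).val 0 1 * (X i).val 1 1 ≠ 0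

/-- I₁ as a right-submodule. -/
def I1 : Submodule (ternions F)ᵐᵒᵖ (ternions F) where
  carrier := {A | A.val 0 0 = 0}
  add_mem' := by intro a b ha hb; simp_all [Set.mem_setOf_eq]
  zero_mem' := by simp
  smul_mem' := by
    intro r A hA
    rcases r with ⟨r⟩
    show ((MulOpposite.op r) • A).val 0 0 = 0
    rw [op_smul, mul00, hA, zero_mul]

lemma spanCond_iff (X : Fin m → ternions F) :
    (Submodule.span (ternions F)ᵐᵒᵖ (Set.range X) : Set (ternions F)) =
      {A : ternions F | A.val 0 0 = 0} ↔ Cond X := by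
  constructor
  · intro h
    have ha : ∀ i, (X i).val 0 0 = 0 := by
      intro i
      have : X i ∈ (Submodule.span (ternions F)ᵐᵒᵖ (Set.range X) : Set (ternions F)) :=
        Submodule.subset_span (Set.mem_range_self i)
      rw [h] at this
      exact this
    refine ⟨ha, ?_⟩
    by_contra hdet
    push_neg at hdet
    -- hdet : ∀ i j, b i * c j - b j * c i = 0
    by_cases hc : ∃ l, (X l).val 1 1 ≠ 0
    · obtain ⟨l, hl⟩ := hc
      -- mk 0 1 0 ∈ span
      have hmem : mk (0:F) 1 0 ∈ Submodule.span (ternions F)ᵐᵒᵖ (Set.range X) := by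
        show _ ∈ (Submodule.span (ternions F)ᵐᵒᵖ (Set.range X) : Set (ternions F)); rw [h]; rfl
      rw [Submodule.mem_span_range_iff_exists_fun] at hmem
      obtain ⟨r, hr⟩ := hmem
      have h01 : ∑ i, (X i).val 0 1 * ((r i).unop).val 1 1 = 1 := by
        have := congrArg (fun A : ternions F => A.val 0 1) hr
        simpa [op_smul, sum_val, mul01, ha] using
          (by
            have e : ∀ i, ((r i) • X i).val 0 1
                = (X i).val 0 1 * ((r i).unop).val 1 1 := by
              intro i
              rcases (r i) with ⟨s⟩
              show ((MulOpposite.op s) • X i).val 0 1 = _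
              rw [op_smul, mul01, ha, zero_mul, zero_add]
              rfl
            calc (∑ i, (X i).val 0 1 * ((r i).unop).val 1 1)
                = ∑ i, ((r i) • X i).val 0 1 := by
                  refine Finset.sum_congr rfl fun i _ => (e i).symm
              _ = (∑ i, (r i) • X i).val 0 1 := (sum_val _ _ _ _).symm
              _ = (mk (0:F) 1 0).val 0 1 := by rw [hr]
              _ = 1 := rfl)
      have h11 : ∑ i, (X i).val 1 1 * ((r i).unop).val 1 1 = 0 := by
        have e : ∀ i, ((r i) • X i).val 1 1
            = (X i).val 1 1 * ((r i).unop).val 1 1 := by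
          intro i
          rcases (r i) with ⟨s⟩
          show ((MulOpposite.op s) • X i).val 1 1 = _
          rw [op_smul, mul11]
          rfl
        calc (∑ i, (X i).val 1 1 * ((r i).unop).val 1 1)
            = ∑ i, ((r i) • X i).val 1 1 := by
              refine Finset.sum_congr rfl fun i _ => (e i).symm
          _ = (∑ i, (r i) • X i).val 1 1 := (sum_val _ _ _ _).symm
          _ = (mk (0:F) 1 0).val 1 1 := by rw [hr]
          _ = 0 := rfl
      apply hl
      calc (X l).val 1 1
          = (X l).val 1 1 * (∑ i, (X i).val 0 1 * ((r i).unop).val 1 1)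
            - (X l).val 0 1 * (∑ i, (X i).val 1 1 * ((r i).unop).val 1 1) := by
            rw [h01, h11]; ring
        _ = ∑ i, (((X l).val 1 1 * ((X i).val 0 1 * ((r i).unop).val 1 1))
              - ((X l).val 0 1 * ((X i).val 1 1 * ((r i).unop).val 1 1))) := by
            rw [Finset.mul_sum, Finset.mul_sum, ← Finset.sum_sub_distrib]
        _ = 0 := by
            refine Finset.sum_eq_zero fun i _ => ?_
            have := hdet i l
            linear_combination ((r i).unop).val 1 1 * this
    · push_neg at hc
      have hmem : mk (0:F) 0 1 ∈ Submodule.span (ternions F)ᵐᵒᵖ (Set.range X) := by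
        show _ ∈ (Submodule.span (ternions F)ᵐᵒᵖ (Set.range X) : Set (ternions F)); rw [h]; rfl
      rw [Submodule.mem_span_range_iff_exists_fun] at hmem
      obtain ⟨r, hr⟩ := hmem
      have h11 : (∑ i, (r i) • X i).val 1 1 = 1 := by rw [hr]; rfl
      rw [sum_val] at h11
      have : ∀ i ∈ Finset.univ, ((r i) • X i).val 1 1 = 0 := by
        intro i _
        rcases (r i) with ⟨s⟩
        show ((MulOpposite.op s) • X i).val 1 1 = 0
        rw [op_smul, mul11, hc, zero_mul]
      rw [Finset.sum_congr rfl this] at h11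
      simp at h11
  · rintro ⟨ha, i, j, hd⟩
    apply le_antisymm
    · have hle : Submodule.span (ternions F)ᵐᵒᵖ (Set.range X) ≤ (I1 : Submodule (ternions F)ᵐᵒᵖ (ternions F)) := by
        rw [Submodule.span_le]
        rintro A ⟨k, rfl⟩
        exact ha k
      exact hle
    · intro A hA
      have hA0 : A.val 0 0 = 0 := hA
      set bi := (X i).val 0 1; set ci := (X i).val 1 1
      set bj := (X j).val 0 1; set cj := (X j).val 1 1
      set d := bi * cj - bj * ci with hdeq
      set y := A.val 0 1; set z := A.val 1 1
      set ti := (y * cj - z * bj) * d⁻¹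
      set tj := (z * bi - y * ci) * d⁻¹
      have hAeq : A = (MulOpposite.op (mk (0:F) 0 ti)) • X i
          + (MulOpposite.op (mk (0:F) 0 tj)) • X j := by
        rw [op_smul, op_smul]
        apply ext3
        · simp [hA0, ha]
        · rw [add_val, mul01, mul01, ha, ha, zero_mul, zero_mul, zero_add, zero_add,
            mk11, mk11]
          show y = bi * ti + bj * tj
          simp only [ti, tj]; field_simp; rw [hdeq]
          ring
        · rw [add_val, mul11, mul11, mk11, mk11]
          show z = ci * ti + cj * tj
          simp only [ti, tj]; field_simp; rw [hdeq]
          ring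
      rw [hAeq]
      exact Submodule.add_mem _
        (Submodule.smul_mem _ _ (Submodule.subset_span (Set.mem_range_self i)))
        (Submodule.smul_mem _ _ (Submodule.subset_span (Set.mem_range_self j)))


/-- A key freeness computation: if `Cond X` and `r • X = 0` then `r = 0`. -/
lemma free_key {X : Fin m → ternions F} (hX : Cond X) :
    ∀ r : ternions F, r • X = 0 → r = 0 := by
  obtain ⟨ha, i, j, hd⟩ := hX
  intro r hr
  have h1 : ∀ k, r.val 0 0 * (X k).val 0 1 + r.val 0 1 * (X k).val 1 1 = 0 := by
    intro k
    have := congrArg (fun Y : Fin m → ternions F => (Y k).val 0 1) hr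
    simpa [Pi.smul_apply, smul_eq_mul, mul01] using this
  have h2 : ∀ k, r.val 1 1 * (X k).val 1 1 = 0 := by
    intro k
    have := congrArg (fun Y : Fin m → ternions F => (Y k).val 1 1) hr
    simpa [Pi.smul_apply, smul_eq_mul, mul11] using this
  have hx : r.val 0 0 = 0 := by
    have : r.val 0 0 * ((X i).val 0 1 * (X j).val 1 1 - (X j).val 0 1 * (X i).val 1 1) = 0 := by
      linear_combination (X j).val 1 1 * h1 i - (X i).val 1 1 * h1 j
    exact (mul_eq_zero.mp this).resolve_right hd
  have hy : r.val 0 1 = 0 := by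
    have : r.val 0 1 * ((X i).val 0 1 * (X j).val 1 1 - (X j).val 0 1 * (X i).val 1 1) = 0 := by
      linear_combination (X i).val 0 1 * h1 j - (X j).val 0 1 * h1 i
    exact (mul_eq_zero.mp this).resolve_right hd
  have hz : r.val 1 1 = 0 := by
    have : r.val 1 1 * ((X i).val 0 1 * (X j).val 1 1 - (X j).val 0 1 * (X i).val 1 1) = 0 := by
      linear_combination (X i).val 0 1 * h2 j - (X j).val 0 1 * h2 i
    exact (mul_eq_zero.mp this).resolve_right hd
  exact ext3 (by simp [hx]) (by simp [hy]) (by simp [hz])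

lemma free_of_cond {X : Fin m → ternions F} (hX : Cond X) :
    Function.Injective (fun r : ternions F => r • X) := by
  intro r s hrs
  have h : (r - s) • X = 0 := by
    rw [sub_smul]
    simp only at hrs
    rw [hrs, sub_self]
  have := free_key hX _ h
  exact sub_eq_zero.mp this

lemma nonuni_of_cond {X : Fin m → ternions F} (hX : Cond X) :
    ¬ ∃ φ : (Fin m → ternions F) →ₗ[ternions F] ternions F, φ X = 1 := by
  rintro ⟨φ, hφ⟩
  have hXsum : X = ∑ k, (X k) • (Pi.single k 1 : Fin m → ternions F) := by
    funext l
    rw [Finset.sum_apply]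
    simp [Pi.smul_apply, smul_eq_mul, Pi.single_apply, mul_ite]
  have hs : φ X = ∑ k, (X k) * φ (Pi.single k 1 : Fin m → ternions F) := by
    conv_lhs => rw [hXsum]
    rw [map_sum]
    refine Finset.sum_congr rfl fun k _ => ?_
    rw [map_smul, smul_eq_mul]
  rw [hφ] at hs
  have h00 : (1 : ternions F).val 0 0 = 0 := by
    rw [hs, sum_val]
    refine Finset.sum_eq_zero fun k _ => ?_
    rw [mul00, hX.1, zero_mul]
  rw [one00] at h00
  exact one_ne_zero h00

/-- the explicit linear map given by right coefficients. -/
def phiAux (Q : Fin m → ternions F) : (Fin m → ternions F) →ₗ[ternions F] ternions F where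
  toFun Y := ∑ i, Y i * Q i
  map_add' := by
    intro Y Z
    simp [add_mul, Finset.sum_add_distrib]
  map_smul' := by
    intro r Y
    simp [Pi.smul_apply, smul_eq_mul, mul_assoc, Finset.mul_sum]

lemma cond_of_free_nonuni {X : Fin m → ternions F}
    (hfree : Function.Injective (fun r : ternions F => r • X))
    (hnon : ¬ ∃ φ : (Fin m → ternions F) →ₗ[ternions F] ternions F, φ X = 1) :
    Cond X := by
  have key : ∀ r : ternions F, r • X = 0 → r = 0 := by
    intro r hr
    have : r • X = (0 : ternions F) • X := by rw [hr, zero_smul]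
    exact hfree this
  -- Step 1 : some c_l ≠ 0
  have hc : ∃ l, (X l).val 1 1 ≠ 0 := by
    by_contra hcall
    push_neg at hcall
    have h0 : (mk (0:F) 1 1) • X = 0 := by
      funext k
      refine ext3 ?_ ?_ ?_ <;>
        simp [Pi.smul_apply, smul_eq_mul, mul00, mul01, mul11, hcall k]
    have := key _ h0
    have h11 : (mk (0:F) 1 1).val 1 1 = (0 : ternions F).val 1 1 := by rw [this]
    rw [mk11, zero_val] at h11
    exact one_ne_zero h11
  obtain ⟨l, hl⟩ := hc
  -- Step 2 : all a_i = 0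
  have ha : ∀ i, (X i).val 0 0 = 0 := by
    by_contra hacontra
    push_neg at hacontra
    obtain ⟨k, hk⟩ := hacontra
    apply hnon
    set ak := (X k).val 0 0 with hak
    set bl := (X l).val 0 1 with hbl
    set cl := (X l).val 1 1 with hcl
    set Q : Fin m → ternions F := fun i =>
      mk (if i = k then ak⁻¹ else 0) (if i = k then -(bl * cl⁻¹) * ak⁻¹ else 0)
         (if i = l then cl⁻¹ else 0) with hQ
    refine ⟨phiAux Q, ?_⟩
    show (∑ i, X i * Q i) = 1
    refine ext3 ?_ ?_ ?_
    · rw [sum_val, one00]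
      have he : ∀ i ∈ Finset.univ, (X i * Q i).val 0 0
          = if i = k then (X i).val 0 0 * ak⁻¹ else 0 := by
        intro i _
        rw [hQ, mul00, mk00, mul_ite, mul_zero]
      rw [Finset.sum_congr rfl he, Finset.sum_ite_eq' Finset.univ k
        (fun i => (X i).val 0 0 * ak⁻¹)]
      simp only [Finset.mem_univ, if_true, ← hak]
      field_simp
    · rw [sum_val, one01]
      have he : ∀ i ∈ Finset.univ, (X i * Q i).val 0 1
          = (if i = k then (X i).val 0 0 * (-(bl * cl⁻¹) * ak⁻¹) else 0)
            + (if i = l then (X i).val 0 1 * cl⁻¹ else 0) := by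
        intro i _
        rw [hQ, mul01, mk01, mk11, mul_ite, mul_ite, mul_zero, mul_zero]
      rw [Finset.sum_congr rfl he, Finset.sum_add_distrib,
        Finset.sum_ite_eq' Finset.univ k (fun i => (X i).val 0 0 * (-(bl * cl⁻¹) * ak⁻¹)),
        Finset.sum_ite_eq' Finset.univ l (fun i => (X i).val 0 1 * cl⁻¹)]
      simp only [Finset.mem_univ, if_true, ← hak, ← hbl]
      field_simp
      ring
    · rw [sum_val, one11]
      have he : ∀ i ∈ Finset.univ, (X i * Q i).val 1 1
          = if i = l then (X i).val 1 1 * cl⁻¹ else 0 := by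
        intro i _
        rw [hQ, mul11, mk11, mul_ite, mul_zero]
      rw [Finset.sum_congr rfl he, Finset.sum_ite_eq' Finset.univ l
        (fun i => (X i).val 1 1 * cl⁻¹)]
      simp only [Finset.mem_univ, if_true, ← hcl]
      field_simp
  -- Step 3 : det condition
  refine ⟨ha, ?_⟩
  by_contra hdet
  push_neg at hdet
  have h0 : (mk ((X l).val 1 1) (-(X l).val 0 1) 0) • X = 0 := by
    funext p
    refine ext3 ?_ ?_ ?_
    · show (mk ((X l).val 1 1) (-(X l).val 0 1) 0 * X p).val 0 0 = 0
      rw [mul00, mk00, ha p, mul_zero]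
    · show (mk ((X l).val 1 1) (-(X l).val 0 1) 0 * X p).val 0 1 = 0
      rw [mul01, mk00, mk01]
      linear_combination hdet p l
    · show (mk ((X l).val 1 1) (-(X l).val 0 1) 0 * X p).val 1 1 = 0
      rw [mul11, mk11, zero_mul]
  have h00eq := key _ h0
  have h00 : (mk ((X l).val 1 1) (-(X l).val 0 1) 0).val 0 0 = (0 : ternions F).val 0 0 := by
    rw [h00eq]
  rw [mk00, zero_val] at h00
  exact hl h00


lemma isUnit_of_ne {r : ternions F} (hx : r.val 0 0 ≠ 0) (hz : r.val 1 1 ≠ 0) :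
    IsUnit r := by
  refine ⟨⟨r, mk (r.val 0 0)⁻¹ (-((r.val 0 0)⁻¹ * r.val 0 1 * (r.val 1 1)⁻¹)) (r.val 1 1)⁻¹,
    ?_, ?_⟩, rfl⟩
  · refine ext3 ?_ ?_ ?_
    · rw [mul00, mk00, one00, mul_inv_cancel₀ hx]
    · rw [mul01, mk01, mk11, one01]
      field_simp
      ring
    · rw [mul11, mk11, one11, mul_inv_cancel₀ hz]
  · refine ext3 ?_ ?_ ?_
    · rw [mul00, mk00, one00, inv_mul_cancel₀ hx]
    · rw [mul01, mk00, mk01, one01]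
      field_simp
      ring
    · rw [mul11, mk11, one11, inv_mul_cancel₀ hz]

lemma cond_smul {X0 : Fin m → ternions F} (h0 : Cond X0) {r : ternions F}
    (hx : r.val 0 0 ≠ 0) (hz : r.val 1 1 ≠ 0) : Cond (r • X0) := by
  obtain ⟨ha, i, j, hd⟩ := h0
  constructor
  · intro k
    show (r * X0 k).val 0 0 = 0
    rw [mul00, ha, mul_zero]
  · refine ⟨i, j, ?_⟩
    show ((r • X0) i).val 0 1 * ((r • X0) j).val 1 1
        - ((r • X0) j).val 0 1 * ((r • X0) i).val 1 1 ≠ 0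
    have e : ∀ k, ((r • X0) k).val 0 1 = r.val 0 0 * (X0 k).val 0 1
        + r.val 0 1 * (X0 k).val 1 1 := fun k => by
      show (r * X0 k).val 0 1 = _; rw [mul01]
    have e' : ∀ k, ((r • X0) k).val 1 1 = r.val 1 1 * (X0 k).val 1 1 := fun k => by
      show (r * X0 k).val 1 1 = _; rw [mul11]
    rw [e i, e j, e' i, e' j]
    have : (r.val 0 0 * (X0 i).val 0 1 + r.val 0 1 * (X0 i).val 1 1)
          * (r.val 1 1 * (X0 j).val 1 1)
        - (r.val 0 0 * (X0 j).val 0 1 + r.val 0 1 * (X0 j).val 1 1)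
          * (r.val 1 1 * (X0 i).val 1 1)
        = r.val 0 0 * r.val 1 1
          * ((X0 i).val 0 1 * (X0 j).val 1 1 - (X0 j).val 0 1 * (X0 i).val 1 1) := by
      ring
    rw [this]
    exact mul_ne_zero (mul_ne_zero hx hz) hd

/-- Fiber of the span map over the module generated by `X0` is equivalent to the units. -/
noncomputable def fiberEquiv {X0 : Fin m → ternions F} (h0 : Cond X0) :
    {r : ternions F // r.val 0 0 ≠ 0 ∧ r.val 1 1 ≠ 0} ≃
      {X' : {Y : Fin m → ternions F // Cond Y} //
        Submodule.span (ternions F) {X'.val} = Submodule.span (ternions F) {X0}} := by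
  refine Equiv.ofBijective (fun u =>
    ⟨⟨u.val • X0, cond_smul h0 u.2.1 u.2.2⟩,
      Submodule.span_singleton_smul_eq (isUnit_of_ne u.2.1 u.2.2) X0⟩) ⟨?_, ?_⟩
  · intro u v huv
    have : u.val • X0 = v.val • X0 := by
      have := congrArg (fun w => w.val.val) huv
      exact this
    exact Subtype.ext (free_of_cond h0 this)
  · rintro ⟨⟨X', hX'⟩, hspan⟩
    have hmem : X' ∈ Submodule.span (ternions F) ({X0} : Set (Fin m → ternions F)) := by
      rw [← hspan]
      exact Submodule.mem_span_singleton_self X'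
    obtain ⟨r, hr⟩ := Submodule.mem_span_singleton.mp hmem
    obtain ⟨ha0, i0, j0, hd0⟩ := hX'
    have e : ∀ k, (X' k).val 0 1 = r.val 0 0 * (X0 k).val 0 1
        + r.val 0 1 * (X0 k).val 1 1 := fun k => by
      rw [← hr]; show (r * X0 k).val 0 1 = _; rw [mul01]
    have e' : ∀ k, (X' k).val 1 1 = r.val 1 1 * (X0 k).val 1 1 := fun k => by
      rw [← hr]; show (r * X0 k).val 1 1 = _; rw [mul11]
    have hx : r.val 0 0 ≠ 0 := by
      intro hx0
      apply hd0
      rw [e i0, e j0, e' i0, e' j0, hx0]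
      ring
    have hz : r.val 1 1 ≠ 0 := by
      intro hz0
      apply hd0
      rw [e i0, e j0, e' i0, e' j0, hz0]
      ring
    exact ⟨⟨r, hx, hz⟩, by apply Subtype.ext; apply Subtype.ext; exact hr⟩


section Count

def PairCond (u v : Fin m → F) : Prop := ∃ i j, u i * v j - u j * v i ≠ 0

lemma pairCond_iff (u v : Fin m → F) :
    PairCond u v ↔ u ≠ 0 ∧ ¬∃ t : F, v = t • u := by
  constructor
  · rintro ⟨i, j, hd⟩
    constructor
    · rintro rfl
      simp at hd
    · rintro ⟨t, rfl⟩
      exact hd (by simp only [Pi.smul_apply, smul_eq_mul]; ring)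
  · rintro ⟨hu, hv⟩
    by_contra hnd
    unfold PairCond at hnd
    push_neg at hnd
    obtain ⟨k, hk⟩ := Function.ne_iff.mp hu
    apply hv
    refine ⟨v k / u k, funext fun i => ?_⟩
    show v i = (v k / u k) * u i
    have hk' : u k ≠ 0 := hk
    field_simp
    linear_combination -hnd i k

/-- the vectors satisfying `Cond` are equivalent to pairs satisfying `PairCond`. -/
def condEquivPair : {X : Fin m → ternions F // Cond X} ≃
    {p : (Fin m → F) × (Fin m → F) // PairCond p.1 p.2} where
  toFun X := ⟨(fun i => (X.val i).val 0 1, fun i => (X.val i).val 1 1), X.2.2⟩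
  invFun p := ⟨fun i => mk 0 (p.val.1 i) (p.val.2 i), ⟨fun i => rfl, p.2⟩⟩
  left_inv := by
    rintro ⟨X, hX⟩
    apply Subtype.ext
    funext i
    exact ext3 (by rw [mk00, hX.1 i]) rfl rfl
  right_inv := by
    rintro ⟨⟨u, v⟩, h⟩
    rfl

def pairEquivSigma : {p : (Fin m → F) × (Fin m → F) // PairCond p.1 p.2} ≃
    Σ _u : {u : Fin m → F // u ≠ 0}, {v : Fin m → F // ¬∃ t : F, v = t • _u.val} where
  toFun p := ⟨⟨p.val.1, ((pairCond_iff _ _).mp p.2).1⟩,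
              ⟨p.val.2, ((pairCond_iff _ _).mp p.2).2⟩⟩
  invFun s := ⟨(s.1.val, s.2.val), (pairCond_iff _ _).mpr ⟨s.1.2, s.2.2⟩⟩
  left_inv := by rintro ⟨⟨u, v⟩, h⟩; rfl
  right_inv := by rintro ⟨⟨u, hu⟩, ⟨v, hv⟩⟩; rfl

variable [Fintype F]

lemma card_line {u : Fin m → F} (hu : u ≠ 0) :
    Nat.card {v : Fin m → F // ∃ t : F, v = t • u} = Fintype.card F := by
  classical
  obtain ⟨k, hk⟩ := Function.ne_iff.mp hu
  have hk' : (u k : F) ≠ 0 := hk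
  have : F ≃ {v : Fin m → F // ∃ t : F, v = t • u} := by
    refine Equiv.ofBijective (fun t => ⟨t • u, t, rfl⟩) ⟨?_, ?_⟩
    · intro t s hts
      have := congrArg (fun w => w.val k) hts
      simp only [Pi.smul_apply, smul_eq_mul] at this
      exact mul_right_cancel₀ hk' this
    · rintro ⟨v, t, rfl⟩
      exact ⟨t, rfl⟩
  rw [← Nat.card_congr this, Nat.card_eq_fintype_card]

lemma card_notline {u : Fin m → F} (hu : u ≠ 0) :
    Nat.card {v : Fin m → F // ¬∃ t : F, v = t • u} =
      Fintype.card F ^ m - Fintype.card F := by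
  classical
  rw [Nat.card_eq_fintype_card, Fintype.card_subtype_compl]
  rw [← Nat.card_eq_fintype_card (α := {v : Fin m → F // ∃ t : F, v = t • u}), card_line hu]
  congr 1
  simp [Fintype.card_fun]

lemma card_ne_zero : Nat.card {u : Fin m → F // u ≠ 0} = Fintype.card F ^ m - 1 := by
  classical
  rw [Nat.card_eq_fintype_card, Fintype.card_subtype_compl,
    Fintype.card_subtype_eq (0 : Fin m → F)]
  congr 1
  simp [Fintype.card_fun]

lemma card_cond : Nat.card {X : Fin m → ternions F // Cond X} =
    (Fintype.card F ^ m - 1) * (Fintype.card F ^ m - Fintype.card F) := by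
  classical
  rw [Nat.card_congr (condEquivPair.trans pairEquivSigma)]
  rw [Nat.card_eq_fintype_card, Fintype.card_sigma]
  have he : ∀ u : {u : Fin m → F // u ≠ 0},
      Fintype.card {v : Fin m → F // ¬∃ t : F, v = t • u.val}
        = Fintype.card F ^ m - Fintype.card F := by
    intro u
    rw [← Nat.card_eq_fintype_card]
    exact card_notline u.2
  rw [Finset.sum_congr rfl (fun u _ => he u), Finset.sum_const, smul_eq_mul,
    Finset.card_univ,
    ← Nat.card_eq_fintype_card (α := {u : Fin m → F // u ≠ 0}), card_ne_zero]

end Count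


def ModP (m : ℕ) (M : Submodule (ternions F) (Fin m → ternions F)) : Prop :=
  ∃ X : Fin m → ternions F, M = Submodule.span (ternions F) {X} ∧
    Function.Injective (fun r : ternions F => r • X) ∧
    ¬ ∃ φ : (Fin m → ternions F) →ₗ[ternions F] ternions F, φ X = 1

def toMod {m : ℕ} (X : {X : Fin m → ternions F // Cond X}) :
    {M : Submodule (ternions F) (Fin m → ternions F) // ModP m M} :=
  ⟨Submodule.span (ternions F) {X.val},
    X.val, rfl, free_of_cond X.2, nonuni_of_cond X.2⟩

noncomputable def mainEquiv (m : ℕ) : {X : Fin m → ternions F // Cond X} ≃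
    {M : Submodule (ternions F) (Fin m → ternions F) // ModP m M} ×
      {r : ternions F // r.val 0 0 ≠ 0 ∧ r.val 1 1 ≠ 0} := by
  refine (Equiv.sigmaFiberEquiv toMod).symm.trans (Equiv.sigmaEquivProdOfEquiv fun M => ?_)
  have hM := M.2.choose_spec
  have hc : Cond M.2.choose := cond_of_free_nonuni hM.2.1 hM.2.2
  refine (Equiv.subtypeEquivRight fun X => ?_).trans (fiberEquiv hc).symm
  rw [Subtype.ext_iff]
  show Submodule.span (ternions F) {X.val} = M.val ↔ _
  exact ⟨fun h => h.trans hM.1, fun h => h.trans hM.1.symm⟩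

lemma card_units_F [Fintype F] : Nat.card {x : F // x ≠ 0} = Fintype.card F - 1 := by
  classical
  rw [Nat.card_eq_fintype_card, Fintype.card_subtype_compl, Fintype.card_subtype_eq]

lemma card_U [Fintype F] : Nat.card {r : ternions F // r.val 0 0 ≠ 0 ∧ r.val 1 1 ≠ 0}
    = (Fintype.card F - 1) * (Fintype.card F * (Fintype.card F - 1)) := by
  have E : {r : ternions F // r.val 0 0 ≠ 0 ∧ r.val 1 1 ≠ 0} ≃
      {x : F // x ≠ 0} × (F × {z : F // z ≠ 0}) := by
    refine Equiv.ofBijective (fun r => (⟨r.val.val 0 0, r.2.1⟩, r.val.val 0 1,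
      ⟨r.val.val 1 1, r.2.2⟩)) ⟨?_, ?_⟩
    · rintro ⟨r, hr⟩ ⟨s, hs⟩ h
      simp only [Prod.mk.injEq, Subtype.mk.injEq] at h
      exact Subtype.ext (ext3 h.1 h.2.1 h.2.2)
    · rintro ⟨⟨x, hx⟩, y, ⟨z, hz⟩⟩
      exact ⟨⟨mk x y z, hx, hz⟩, rfl⟩
  rw [Nat.card_congr E, Nat.card_prod, Nat.card_prod, card_units_F,
    Nat.card_eq_fintype_card (α := F)]

end TernAux

/-- Over `F = GF(q)`, the number of vectors `X ∈ R^{n+1}` whose coordinates generate as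
right ideal exactly `I₁` (zero first column) is `q·(q^n - 1)·(q^{n+1} - 1)`;
consequently the number `N` of non-unimodular free cyclic submodules of `R^{n+1}`
satisfies `(q - 1)² · N = (q^n - 1)·(q^{n+1} - 1)`. -/
theorem ternion_count_nonUnimodular_free (F : Type) [Field F] [Fintype F] (q n : ℕ)
    (hq : Fintype.card F = q) (hn : 1 ≤ n) :
    Nat.card {X : Fin (n + 1) → ternions F //
        (Submodule.span (ternions F)ᵐᵒᵖ (Set.range X) : Set (ternions F)) =
          {A : ternions F | A.val 0 0 = 0}} = q * (q ^ n - 1) * (q ^ (n + 1) - 1) ∧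
    (q - 1) ^ 2 *
        Nat.card {M : Submodule (ternions F) (Fin (n + 1) → ternions F) //
          ∃ X : Fin (n + 1) → ternions F, M = Submodule.span (ternions F) {X} ∧
            Function.Injective (fun r : ternions F => r • X) ∧
            ¬ ∃ φ : (Fin (n + 1) → ternions F) →ₗ[ternions F] ternions F, φ X = 1} =
      (q ^ n - 1) * (q ^ (n + 1) - 1) := by
  subst hq
  set q := Fintype.card F with hq
  have hq0 : 0 < q := Fintype.card_pos
  have hqn : 1 ≤ q ^ n := Nat.one_le_pow _ _ hq0
  -- part 1
  have hc1 : Nat.card {X : Fin (n + 1) → ternions F //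
      (Submodule.span (ternions F)ᵐᵒᵖ (Set.range X) : Set (ternions F)) =
        {A : ternions F | A.val 0 0 = 0}} =
      Nat.card {X : Fin (n + 1) → ternions F // TernAux.Cond X} :=
    Nat.card_congr (Equiv.subtypeEquivRight fun X => TernAux.spanCond_iff X)
  have hsub : q ^ (n + 1) - q = q * (q ^ n - 1) := by
    rw [Nat.mul_sub, mul_one, ← pow_succ']
  have hpart1 : Nat.card {X : Fin (n + 1) → ternions F //
      (Submodule.span (ternions F)ᵐᵒᵖ (Set.range X) : Set (ternions F)) =
        {A : ternions F | A.val 0 0 = 0}} = q * (q ^ n - 1) * (q ^ (n + 1) - 1) := by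
    rw [hc1, TernAux.card_cond, hsub]
    ring
  refine ⟨hpart1, ?_⟩
  -- part 2
  have hc2 : Nat.card {X : Fin (n + 1) → ternions F // TernAux.Cond X} =
      Nat.card {M : Submodule (ternions F) (Fin (n + 1) → ternions F) //
          ∃ X : Fin (n + 1) → ternions F, M = Submodule.span (ternions F) {X} ∧
            Function.Injective (fun r : ternions F => r • X) ∧
            ¬ ∃ φ : (Fin (n + 1) → ternions F) →ₗ[ternions F] ternions F, φ X = 1} *
        ((q - 1) * (q * (q - 1))) := by
    rw [Nat.card_congr (TernAux.mainEquiv (n + 1)), Nat.card_prod, TernAux.card_U, ← hq]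
    rfl
  set N := Nat.card {M : Submodule (ternions F) (Fin (n + 1) → ternions F) //
          ∃ X : Fin (n + 1) → ternions F, M = Submodule.span (ternions F) {X} ∧
            Function.Injective (fun r : ternions F => r • X) ∧
            ¬ ∃ φ : (Fin (n + 1) → ternions F) →ₗ[ternions F] ternions F, φ X = 1} with hN
  refine Nat.eq_of_mul_eq_mul_left hq0 ?_
  calc q * ((q - 1) ^ 2 * N) = N * ((q - 1) * (q * (q - 1))) := by ring
    _ = q * (q ^ n - 1) * (q ^ (n + 1) - 1) := by rw [← hc2, ← hc1, hpart1]
    _ = q * ((q ^ n - 1) * (q ^ (n + 1) - 1)) := by ring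
end

section
/- Let F = GF(q) be a finite field with q elements, R the ring of ternions over F, and n ≥ 1. If X ∈ R^{n+1} is a vector with I_X = rad R (the right ideal generated by the coordinates of X equals the Jacobson radical of R), then the number of non-unimodular free cyclic submodules of R^{n+1} containing X equals (q + 1)(q^n − 1)/(q − 1), i.e., this number N₂ satisfies (q − 1)·N₂ = (q + 1)(q^n − 1). -/
set_option synthInstance.maxHeartbeats 1000000
set_option maxHeartbeats 1000000

open Matrix
open scoped Classical
set_option linter.unusedSectionVars false


variable {F : Type} [Field F] [Fintype F] {n : ℕ}


lemma mem_tern (A : Matrix (Fin 2) (Fin 2) F) : A ∈ ternions F ↔ A 1 0 = 0 := Iff.rfl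

def tern (a b c : F) : ternions F := ⟨!![a, b; 0, c], by simp [mem_tern]⟩

lemma tern_eta (r : ternions F) : r = tern (r.val 0 0) (r.val 0 1) (r.val 1 1) := by
  apply Subtype.ext
  ext i j
  fin_cases i <;> fin_cases j <;> simp [tern] <;> exact r.2

lemma tern_mul (a b c a' b' c' : F) :
    (tern a b c : ternions F) * tern a' b' c' = tern (a*a') (a*b'+b*c') (c*c') := by
  apply Subtype.ext
  show (tern a b c).val * (tern a' b' c').val = _
  simp [tern, Matrix.mul_fin_two]

lemma tern_inj {a b c a' b' c' : F} (h : (tern a b c : ternions F) = tern a' b' c') :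
    a = a' ∧ b = b' ∧ c = c' := by
  have h0 := congrArg (fun r : ternions F => r.val 0 0) h
  have h1 := congrArg (fun r : ternions F => r.val 0 1) h
  have h2 := congrArg (fun r : ternions F => r.val 1 1) h
  simp [tern] at h0 h1 h2
  exact ⟨h0, h1, h2⟩

/-- concrete linear independence of two vectors -/
def Indep (b c : Fin (n+1) → F) : Prop :=
  ∀ α β : F, (∀ i, α * b i + β * c i = 0) → α = 0 ∧ β = 0

def T (b c : Fin (n+1) → F) : Fin (n+1) → ternions F := fun i => tern 0 (b i) (c i)

lemma smul_tern (r : ternions F) (a b c : F) :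
    r * tern a b c = tern (r.val 0 0 * a) (r.val 0 0 * b + r.val 0 1 * c) (r.val 1 1 * c) := by
  conv_lhs => rw [tern_eta r]
  rw [tern_mul]

lemma smul_T (r : ternions F) (b c : Fin (n+1) → F) :
    r • T b c = T (fun i => r.val 0 0 * b i + r.val 0 1 * c i) (fun i => r.val 1 1 * c i) := by
  funext i
  show r * T b c i = _
  simp [T, smul_tern]

lemma indep_c_ne {b c : Fin (n+1) → F} (h : Indep b c) : ∃ i, c i ≠ 0 := by
  by_contra hc
  push_neg at hc
  have := (h 0 1 (by intro i; simp [hc i])).2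
  exact one_ne_zero this

lemma free_T {b c : Fin (n+1) → F} (h : Indep b c) :
    Function.Injective (fun r : ternions F => r • T b c) := by
  intro r s hrs
  simp only [smul_T] at hrs
  have h1 : ∀ i, r.val 0 0 * b i + r.val 0 1 * c i = s.val 0 0 * b i + s.val 0 1 * c i := by
    intro i
    have := congrFun (congrArg (fun Z => (fun j => (Z j).val 0 1)) hrs) i
    simpa [T, tern] using this
  have h2 : ∀ i, r.val 1 1 * c i = s.val 1 1 * c i := by
    intro i
    have := congrFun (congrArg (fun Z => (fun j => (Z j).val 1 1)) hrs) i
    simpa [T, tern] using this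
  obtain ⟨i0, hi0⟩ := indep_c_ne h
  have e11 : r.val 1 1 = s.val 1 1 := mul_right_cancel₀ hi0 (h2 i0)
  have key := h (r.val 0 0 - s.val 0 0) (r.val 0 1 - s.val 0 1)
    (fun i => by linear_combination h1 i)
  have e00 : r.val 0 0 = s.val 0 0 := sub_eq_zero.mp key.1
  have e01 : r.val 0 1 = s.val 0 1 := sub_eq_zero.mp key.2
  rw [tern_eta r, tern_eta s, e00, e01, e11]

def ent (i j : Fin 2) : ternions F →+ F where
  toFun A := A.val i j
  map_zero' := rfl
  map_add' := by intros; rfl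

lemma nonuni {Y : Fin (n+1) → ternions F} (hY : ∀ i, (Y i).val 0 0 = 0) :
    ¬ ∃ φ : (Fin (n+1) → ternions F) →ₗ[ternions F] ternions F, φ Y = 1 := by
  rintro ⟨φ, hφ⟩
  have hrep : Y = ∑ i, Y i • (fun j => if i = j then (1 : ternions F) else 0) :=
    pi_eq_sum_univ Y
  have : φ Y = ∑ i, Y i * φ (fun j => if i = j then (1:ternions F) else 0) := by
    conv_lhs => rw [hrep]
    rw [map_sum]
    simp [smul_eq_mul]
  have h0 : ent 0 0 (φ Y) = 0 := by
    rw [this, map_sum]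
    apply Finset.sum_eq_zero
    intro i _
    set s := φ (fun j => if i = j then (1:ternions F) else 0) with hs
    show (Y i * s).val 0 0 = 0
    have hcoe : (Y i * s).val = (Y i).val * s.val := rfl
    rw [hcoe, Matrix.mul_apply, Fin.sum_univ_two, hY i, s.2]
    ring
  rw [hφ] at h0
  change (1 : ternions F).val 0 0 = 0 at h0
  simp [ent, Matrix.one_apply] at h0

def PairT (y : Fin (n+1) → F) : Type :=
  {w : (F × F) × ((Fin (n+1) → F) × (Fin (n+1) → F)) //
    Indep w.2.1 w.2.2 ∧ ∀ i, y i = w.1.1 * w.2.1 i + w.1.2 * w.2.2 i}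

noncomputable def hmap (y : Fin (n+1) → F)
    (p : {lm : F × F // lm ≠ 0} × {v : Fin (n+1) → F // Indep y v}) : PairT y :=
  if hl : p.1.val.1 = 0 then
    ⟨((p.1.val.1, p.1.val.2), (p.2.val, fun i => (p.1.val.2)⁻¹ * y i)), by
      have hmu : p.1.val.2 ≠ 0 := by
        intro h0
        apply p.1.prop
        have : p.1.val = (p.1.val.1, p.1.val.2) := rfl
        rw [this, hl, h0]; rfl
      constructor
      · intro α β hab
        have key := p.2.prop (β * (p.1.val.2)⁻¹) α (fun i => by linear_combination hab i)
        refine ⟨key.2, ?_⟩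
        have h1 := key.1
        have h2 := (mul_eq_zero.mp h1).resolve_right (inv_ne_zero hmu)
        exact h2
      · intro i
        rw [hl]
        field_simp
        ring⟩
  else
    ⟨((p.1.val.1, p.1.val.2), (fun i => (p.1.val.1)⁻¹ * (y i - p.1.val.2 * p.2.val i), p.2.val)), by
      constructor
      · intro α β hab
        have key := p.2.prop (α * (p.1.val.1)⁻¹) (β - α * (p.1.val.1)⁻¹ * p.1.val.2)
          (fun i => by linear_combination hab i)
        have h1 := (mul_eq_zero.mp key.1).resolve_right (inv_ne_zero hl)
        refine ⟨h1, ?_⟩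
        have h2 := key.2
        rw [h1] at h2
        simpa using h2
      · intro i
        field_simp
        ring⟩

lemma hmap_bij (y : Fin (n+1) → F) (hy : ∃ i, y i ≠ 0) : Function.Bijective (hmap y) := by
  constructor
  · intro p p' hpp
    have hval : (hmap y p).val = (hmap y p').val := congrArg Subtype.val hpp
    by_cases hl : p.1.val.1 = 0
    · have hl' : p'.1.val.1 = 0 := by
        by_contra hl'
        unfold hmap at hval; erw [dif_pos hl, dif_neg hl'] at hval
        have := congrArg (fun z => z.1.1) hval
        simp at this
        exact hl' (this ▸ hl)
      unfold hmap at hval; erw [dif_pos hl, dif_pos hl'] at hval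
      have e1 : p.1.val = p'.1.val := by
        have h1 := congrArg (fun z => z.1.1) hval
        have h2 := congrArg (fun z => z.1.2) hval
        simp at h1 h2
        exact Prod.ext h1 h2
      have e2 : p.2.val = p'.2.val := by
        have := congrArg (fun z => z.2.1) hval
        simpa using this
      exact Prod.ext (Subtype.ext e1) (Subtype.ext e2)
    · have hl' : ¬ p'.1.val.1 = 0 := by
        intro hl'
        unfold hmap at hval; erw [dif_neg hl, dif_pos hl'] at hval
        have := congrArg (fun z => z.1.1) hval
        simp at this
        exact hl (this ▸ hl')
      unfold hmap at hval; erw [dif_neg hl, dif_neg hl'] at hval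
      have e1 : p.1.val = p'.1.val := by
        have h1 := congrArg (fun z => z.1.1) hval
        have h2 := congrArg (fun z => z.1.2) hval
        simp at h1 h2
        exact Prod.ext h1 h2
      have e2 : p.2.val = p'.2.val := by
        have := congrArg (fun z => z.2.2) hval
        simpa using this
      exact Prod.ext (Subtype.ext e1) (Subtype.ext e2)
  · rintro ⟨⟨⟨l, m⟩, ⟨b, c⟩⟩, hind, hrep⟩
    simp only at hind hrep
    have hlm : ((l, m) : F × F) ≠ 0 := by
      intro h0
      obtain ⟨i0, hi0⟩ := hy
      have h1 : l = 0 := congrArg Prod.fst h0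
      have h2 : m = 0 := congrArg Prod.snd h0
      have := hrep i0
      rw [h1, h2] at this
      simp at this
      exact hi0 this
    by_cases hl : l = 0
    · have hmu : m ≠ 0 := by
        intro h0
        apply hlm
        rw [hl, h0]; rfl
      have hyc : ∀ i, y i = m * c i := fun i => by
        have := hrep i; rw [hl] at this; simpa using this
      have hIyb : Indep y b := by
        intro α β hab
        have key := hind β (α * m) (fun i => by
          have h1 := hab i
          rw [hyc i] at h1
          linear_combination h1)
        refine ⟨(mul_eq_zero.mp key.2).resolve_right hmu, key.1⟩
      refine ⟨⟨⟨(l, m), hlm⟩, ⟨b, hIyb⟩⟩, ?_⟩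
      apply Subtype.ext
      unfold hmap; erw [dif_pos (show l = 0 from hl)]
      refine Prod.ext rfl (Prod.ext rfl ?_)
      funext i
      show m⁻¹ * y i = c i
      rw [hyc i]
      field_simp
    · have hIyc : Indep y c := by
        intro α β hab
        have key := hind (α * l) (α * m + β) (fun i => by
          have h1 := hab i
          rw [hrep i] at h1
          linear_combination h1)
        have h1 := (mul_eq_zero.mp key.1).resolve_right hl
        refine ⟨h1, ?_⟩
        have h2 := key.2
        rw [h1] at h2
        simpa using h2
      refine ⟨⟨⟨(l, m), hlm⟩, ⟨c, hIyc⟩⟩, ?_⟩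
      apply Subtype.ext
      unfold hmap; erw [dif_neg (show ¬ l = 0 from hl)]
      refine Prod.ext rfl (Prod.ext ?_ rfl)
      funext i
      show l⁻¹ * (y i - m * c i) = b i
      rw [hrep i]
      field_simp
      ring

lemma card_not_indep (y : Fin (n+1) → F) (hy : ∃ i, y i ≠ 0) :
    Nat.card {v : Fin (n+1) → F // ¬ Indep y v} = Fintype.card F := by
  obtain ⟨i0, hi0⟩ := hy
  rw [← Nat.card_eq_fintype_card]
  symm
  apply Nat.card_eq_of_bijective (fun t : F => ⟨fun i => t * y i, by
    intro hI
    have := (hI t (-1) (fun i => by ring)).2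
    simpa using this⟩)
  constructor
  · intro t s hts
    have := congrFun (congrArg Subtype.val hts) i0
    exact mul_right_cancel₀ hi0 this
  · rintro ⟨v, hv⟩
    unfold Indep at hv
    push_neg at hv
    obtain ⟨α, β, hab, hne⟩ := hv
    by_cases hb : β = 0
    · exfalso
      have ha : α ≠ 0 := fun h0 => (hne h0) hb
      have := hab i0
      rw [hb] at this
      simp at this
      rcases this with h | h
      · exact ha h
      · exact hi0 h
    · refine ⟨-α / β, ?_⟩
      apply Subtype.ext
      funext i
      show -α / β * y i = v i
      have := hab i
      field_simp
      linear_combination -this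

lemma card_indep (y : Fin (n+1) → F) (hy : ∃ i, y i ≠ 0) (q : ℕ)
    (hq : Fintype.card F = q) :
    Nat.card {v : Fin (n+1) → F // Indep y v} = q^(n+1) - q := by
  have h1 := card_not_indep y hy
  have h2 : Fintype.card {v : Fin (n+1) → F // ¬ ¬ Indep y v}
      = Fintype.card (Fin (n+1) → F) - Fintype.card {v : Fin (n+1) → F // ¬ Indep y v} :=
    Fintype.card_subtype_compl _
  have h3 : Fintype.card {v : Fin (n+1) → F // Indep y v}
      = Fintype.card {v : Fin (n+1) → F // ¬ ¬ Indep y v} :=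
    Fintype.card_congr (Equiv.subtypeEquivRight (fun v => (not_not).symm))
  have h4 : Fintype.card (Fin (n+1) → F) = q^(n+1) := by
    rw [Fintype.card_fun, hq, Fintype.card_fin]
  rw [Nat.card_eq_fintype_card] at h1 ⊢
  rw [h3, h2, h4, h1, hq]

lemma card_lm (q : ℕ) (hq : Fintype.card F = q) :
    Nat.card {lm : F × F // lm ≠ 0} = q * q - 1 := by
  have h2 : Fintype.card {lm : F × F // ¬ lm = 0}
      = Fintype.card (F × F) - Fintype.card {lm : F × F // lm = 0} :=
    Fintype.card_subtype_compl _
  rw [Nat.card_eq_fintype_card]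
  have h3 : Fintype.card {lm : F × F // lm ≠ 0} = Fintype.card {lm : F × F // ¬ lm = 0} := rfl
  rw [h3, h2, Fintype.card_subtype_eq, Fintype.card_prod, hq]

lemma card_PairT (y : Fin (n+1) → F) (hy : ∃ i, y i ≠ 0) (q : ℕ)
    (hq : Fintype.card F = q) :
    Nat.card (PairT y) = (q * q - 1) * (q^(n+1) - q) := by
  rw [← Nat.card_eq_of_bijective _ (hmap_bij y hy), Nat.card_prod,
    card_lm q hq, card_indep y hy q hq]

@[simp] lemma tern_val00 (a b c : F) : (tern a b c : ternions F).val 0 0 = a := by simp [tern]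
@[simp] lemma tern_val01 (a b c : F) : (tern a b c : ternions F).val 0 1 = b := by simp [tern]
@[simp] lemma tern_val11 (a b c : F) : (tern a b c : ternions F).val 1 1 = c := by simp [tern]
@[simp] lemma tern_val10 (a b c : F) : (tern a b c : ternions F).val 1 0 = 0 := by simp [tern]

lemma tern_zero : (tern 0 0 0 : ternions F) = 0 := by
  apply Subtype.ext
  show !![(0:F), 0; 0, 0] = 0
  ext i j
  fin_cases i <;> fin_cases j <;> simp

lemma tern_one : (tern 1 0 1 : ternions F) = 1 := by
  apply Subtype.ext
  show !![(1:F), 0; 0, 1] = 1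
  ext i j
  fin_cases i <;> fin_cases j <;> simp [Matrix.one_apply]

lemma tern_add (a b c a' b' c' : F) :
    (tern a b c : ternions F) + tern a' b' c' = tern (a+a') (b+b') (c+c') := by
  apply Subtype.ext
  show (tern a b c).val + (tern a' b' c').val = _
  ext i j
  fin_cases i <;> fin_cases j <;> simp [tern]

lemma T_inj {b c b' c' : Fin (n+1) → F} (h : T b c = T b' c') :
    (∀ i, b i = b' i) ∧ (∀ i, c i = c' i) := by
  constructor <;> intro i <;>
    [exact (tern_inj (congrFun h i)).2.1; exact (tern_inj (congrFun h i)).2.2]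

def MsetT (y : Fin (n+1) → F) : Type :=
  {M : Submodule (ternions F) (Fin (n + 1) → ternions F) //
    (∃ Y : Fin (n + 1) → ternions F, M = Submodule.span (ternions F) {Y} ∧
      Function.Injective (fun r : ternions F => r • Y) ∧
      ¬ ∃ φ : (Fin (n + 1) → ternions F) →ₗ[ternions F] ternions F, φ Y = 1) ∧
    T y (fun _ => 0) ∈ M}

noncomputable def fmap (y : Fin (n+1) → F) (w : PairT y) : MsetT y :=
  ⟨Submodule.span (ternions F) {T w.val.2.1 w.val.2.2}, by
    refine ⟨⟨T w.val.2.1 w.val.2.2, rfl, free_T w.prop.1, nonuni (fun i => by simp [T])⟩, ?_⟩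
    rw [Submodule.mem_span_singleton]
    refine ⟨tern w.val.1.1 w.val.1.2 0, ?_⟩
    rw [smul_T]
    simp only [tern_val00, tern_val01, tern_val11]
    rw [show (fun i => w.val.1.1 * w.val.2.1 i + w.val.1.2 * w.val.2.2 i) = y from
        funext fun i => (w.prop.2 i).symm,
      show (fun i => (0:F) * w.val.2.2 i) = (fun _ => (0:F)) from funext fun i => by ring]⟩

lemma fmap_val (y : Fin (n+1) → F) (w : PairT y) :
    (fmap y w).val = Submodule.span (ternions F) {T w.val.2.1 w.val.2.2} := rfl

lemma fmap_surj (y : Fin (n+1) → F) : Function.Surjective (fmap y) := by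
  rintro ⟨M, ⟨Y, hM, hfree, hnonuni⟩, hXM⟩
  -- the diagonal-bottom entries of Y are not all zero
  have hc : ∃ i, (Y i).val 1 1 ≠ 0 := by
    by_contra hc
    push_neg at hc
    have h0 : (tern 0 0 1 : ternions F) • Y = (0 : ternions F) • Y := by
      funext i
      show tern 0 0 1 * Y i = (0 : ternions F) * Y i
      rw [zero_mul]
      conv_lhs => rw [tern_eta (Y i), tern_mul]
      rw [hc i]
      rw [← tern_zero]
      congr 1 <;> ring
    have h1 := hfree h0
    have h2 := congrArg (fun r : ternions F => r.val 1 1) h1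
    simp at h2
  -- the top-left entries of Y are all zero
  have ha : ∀ i, (Y i).val 0 0 = 0 := by
    by_contra ha
    push_neg at ha
    obtain ⟨j, hj⟩ := ha
    obtain ⟨k, hk⟩ := hc
    apply hnonuni
    refine ⟨⟨⟨fun Z => Z j * tern ((Y j).val 0 0)⁻¹
        (-(((Y j).val 0 0)⁻¹ * (Y k).val 0 1 * ((Y k).val 1 1)⁻¹)) 0
        + Z k * tern 0 0 ((Y k).val 1 1)⁻¹, ?_⟩, ?_⟩, ?_⟩
    · intro Z W
      show (Z + W) j * _ + (Z + W) k * _ = _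
      simp only [Pi.add_apply]
      noncomm_ring
    · intro r Z
      show (r • Z) j * _ + (r • Z) k * _ = r • (Z j * _ + Z k * _)
      simp only [Pi.smul_apply, smul_eq_mul]
      noncomm_ring
    · show Y j * _ + Y k * _ = 1
      conv_lhs => rw [tern_eta (Y j), tern_eta (Y k), tern_mul, tern_mul, tern_add]
      rw [← tern_one]
      congr 1
      · simp only [tern_val00, tern_val01, tern_val11]
        field_simp
        ring
      · simp only [tern_val00, tern_val01, tern_val11]
        field_simp
        ring
      · simp only [tern_val00, tern_val01, tern_val11]
        field_simp
        ring
  -- Y has the normal form T b c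
  have hYT : Y = T (fun i => (Y i).val 0 1) (fun i => (Y i).val 1 1) := by
    funext i
    conv_lhs => rw [tern_eta (Y i)]
    rw [ha i]
    rfl
  -- independence of b and c
  have hind : Indep (fun i => (Y i).val 0 1) (fun i => (Y i).val 1 1) := by
    intro α β hab
    have h0 : (tern α β 0 : ternions F) • Y = (0 : ternions F) • Y := by
      funext i
      show tern α β 0 * Y i = (0 : ternions F) * Y i
      rw [zero_mul]
      conv_lhs => rw [tern_eta (Y i), tern_mul]
      rw [ha i, hab i, ← tern_zero]
      congr 1 <;> ring
    have h1 := hfree h0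
    have := tern_inj (h1.trans tern_zero.symm)
    exact ⟨this.1, this.2.1⟩
  -- the coefficients expressing X through Y
  rw [hM, Submodule.mem_span_singleton] at hXM
  obtain ⟨r, hr⟩ := hXM
  rw [hYT, smul_T] at hr
  have hcomp := T_inj hr
  refine ⟨⟨((r.val 0 0, r.val 0 1), (fun i => (Y i).val 0 1, fun i => (Y i).val 1 1)),
    hind, fun i => (hcomp.1 i).symm⟩, ?_⟩
  apply Subtype.ext
  show Submodule.span (ternions F) {T (fun i => (Y i).val 0 1) (fun i => (Y i).val 1 1)} = M
  rw [hM]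
  exact congrArg (fun Z => Submodule.span (ternions F) {Z}) hYT.symm

lemma T_congr {b c b' c' : Fin (n+1) → F} (hb : ∀ i, b i = b' i) (hc : ∀ i, c i = c' i) :
    T b c = T b' c' := by
  funext i
  show tern 0 (b i) (c i) = tern 0 (b' i) (c' i)
  rw [hb i, hc i]

lemma lm_unique {y b c : Fin (n+1) → F} (h : Indep b c) {l m l' m' : F}
    (h1 : ∀ i, y i = l * b i + m * c i) (h2 : ∀ i, y i = l' * b i + m' * c i) :
    l = l' ∧ m = m' := by
  have key := h (l - l') (m - m') (fun i => by linear_combination h2 i - h1 i)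
  exact ⟨sub_eq_zero.mp key.1, sub_eq_zero.mp key.2⟩

/-- the triple parameter space -/
def Trip (F : Type) [Field F] : Type := {t : F × F × F // t.1 ≠ 0 ∧ t.2.1 ≠ 0}

lemma card_ne_zero (q : ℕ) (hq : Fintype.card F = q) :
    Nat.card {x : F // x ≠ 0} = q - 1 := by
  have h2 : Fintype.card {x : F // ¬ x = 0}
      = Fintype.card F - Fintype.card {x : F // x = 0} :=
    Fintype.card_subtype_compl _
  rw [Nat.card_eq_fintype_card]
  have h3 : Fintype.card {x : F // x ≠ 0} = Fintype.card {x : F // ¬ x = 0} := rfl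
  rw [h3, h2, Fintype.card_subtype_eq, hq]

lemma card_Trip (q : ℕ) (hq : Fintype.card F = q) :
    Nat.card (Trip F) = (q - 1) * ((q - 1) * q) := by
  unfold Trip
  have hbij : Function.Bijective
      (fun p : {x : F // x ≠ 0} × ({x : F // x ≠ 0} × F) =>
        (⟨(p.1.val, p.2.1.val, p.2.2), p.1.prop, p.2.1.prop⟩ : Trip F)) := by
    constructor
    · rintro ⟨⟨g, hg⟩, ⟨a, ha⟩, b⟩ ⟨⟨g', hg'⟩, ⟨a', ha'⟩, b'⟩ h
      have := congrArg Subtype.val h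
      simp only [Prod.mk.injEq] at this
      simp [Prod.ext_iff, this.1, this.2.1, this.2.2]
    · rintro ⟨⟨g, a, b⟩, hg, ha⟩
      exact ⟨⟨⟨g, hg⟩, ⟨a, ha⟩, b⟩, rfl⟩
  rw [← Nat.card_eq_of_bijective _ hbij, Nat.card_prod, Nat.card_prod,
    card_ne_zero q hq, Nat.card_eq_fintype_card, hq]

noncomputable def gmap (y : Fin (n+1) → F) (w0 : PairT y) (t : Trip F) :
    {w : PairT y // fmap y w = fmap y w0} := by
  refine ⟨⟨((w0.val.1.1 * (t.val.2.1)⁻¹,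
      w0.val.1.2 * (t.val.1)⁻¹ - w0.val.1.1 * (t.val.2.1)⁻¹ * t.val.2.2 * (t.val.1)⁻¹),
      (fun i => t.val.2.1 * w0.val.2.1 i + t.val.2.2 * w0.val.2.2 i,
       fun i => t.val.1 * w0.val.2.2 i)), ?_, ?_⟩, ?_⟩
  · -- independence
    intro α β hab
    have key := w0.prop.1 (α * t.val.2.1) (α * t.val.2.2 + β * t.val.1)
      (fun i => by linear_combination hab i)
    have h1 := (mul_eq_zero.mp key.1).resolve_right t.prop.2
    refine ⟨h1, ?_⟩
    have h2 := key.2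
    rw [h1] at h2
    simp only [zero_mul, zero_add] at h2
    exact (mul_eq_zero.mp h2).resolve_right t.prop.1
  · -- representation of y
    intro i
    have ht1 := t.prop.1
    have ht2 := t.prop.2
    rw [w0.prop.2 i]
    field_simp
    ring
  · -- same span
    apply Subtype.ext
    erw [fmap_val, fmap_val]
    apply le_antisymm
    · rw [Submodule.span_le, Set.singleton_subset_iff, SetLike.mem_coe,
        Submodule.mem_span_singleton]
      refine ⟨tern (t.val.2.1) (t.val.2.2) (t.val.1), ?_⟩
      rw [smul_T]
      simp only [tern_val00, tern_val01, tern_val11]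
    · rw [Submodule.span_le, Set.singleton_subset_iff, SetLike.mem_coe,
        Submodule.mem_span_singleton]
      refine ⟨tern (t.val.2.1)⁻¹ (-((t.val.2.1)⁻¹ * t.val.2.2 * (t.val.1)⁻¹)) (t.val.1)⁻¹, ?_⟩
      rw [smul_T]
      simp only [tern_val00, tern_val01, tern_val11]
      apply T_congr
      · intro i
        have ht1 := t.prop.1
        have ht2 := t.prop.2
        field_simp
        ring
      · intro i
        have ht1 := t.prop.1
        field_simp

lemma gmap_bij (y : Fin (n+1) → F) (w0 : PairT y) :
    Function.Bijective (gmap y w0) := by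
  obtain ⟨i1, hi1⟩ := indep_c_ne w0.prop.1
  constructor
  · rintro ⟨⟨g, a, b⟩, hg, ha⟩ ⟨⟨g', a', b'⟩, hg', ha'⟩ h
    have hval := congrArg Subtype.val (congrArg Subtype.val h)
    simp only [gmap, Prod.mk.injEq] at hval
    obtain ⟨-, hbb, hcc⟩ := hval
    have hgg : g = g' := mul_right_cancel₀ hi1 (congrFun hcc i1)
    have key := w0.prop.1 (a - a') (b - b') (fun i => by
      linear_combination congrFun hbb i)
    have haa : a = a' := sub_eq_zero.mp key.1
    have hbb' : b = b' := sub_eq_zero.mp key.2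
    apply Subtype.ext
    simp [hgg, haa, hbb', Prod.ext_iff]
  · rintro ⟨⟨⟨⟨l, m⟩, ⟨b, c⟩⟩, hind, hrep⟩, hw⟩
    obtain ⟨⟨⟨l0, m0⟩, ⟨b0, c0⟩⟩, hind0, hrep0⟩ := w0
    simp only at hind hrep hind0 hrep0 hi1
    have hsp : Submodule.span (ternions F) {T b c} = Submodule.span (ternions F) {T b0 c0} := by
      have := congrArg Subtype.val hw
      erw [fmap_val, fmap_val] at this
      exact this
    obtain ⟨r, hr⟩ := Submodule.mem_span_singleton.mp
      (hsp ▸ Submodule.mem_span_singleton_self (T b c) :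
        T b c ∈ Submodule.span (ternions F) {T b0 c0})
    obtain ⟨r', hr'⟩ := Submodule.mem_span_singleton.mp
      (hsp.symm ▸ Submodule.mem_span_singleton_self (T b0 c0) :
        T b0 c0 ∈ Submodule.span (ternions F) {T b c})
    rw [smul_T] at hr hr'
    have h1 := T_inj hr
    have h2 := T_inj hr'
    -- r's bottom diagonal entry is nonzero
    have hγ : r.val 1 1 ≠ 0 := by
      intro h0
      have hc1 : c i1 = 0 := by rw [← h1.2 i1, h0, zero_mul]
      have := h2.2 i1
      rw [hc1, mul_zero] at this
      exact hi1 this.symm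
    -- r's top diagonal entry is nonzero
    have hα : r.val 0 0 ≠ 0 := by
      intro h0
      have hbi : ∀ i, b i = r.val 0 1 * c0 i := fun i => by
        have := h1.1 i
        rw [h0, zero_mul, zero_add] at this
        exact this.symm
      have hb0i : ∀ i, b0 i = (r'.val 0 0 * r.val 0 1 + r'.val 0 1 * r.val 1 1) * c0 i :=
        fun i => by
          rw [← h2.1 i, hbi i, ← h1.2 i]
          ring
      have key := hind0 1 (-(r'.val 0 0 * r.val 0 1 + r'.val 0 1 * r.val 1 1))
        (fun i => by rw [hb0i i]; ring)
      exact one_ne_zero key.1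
    -- relations expressing b0, c0 through b, c
    have hc0 : ∀ i, c0 i = (r.val 1 1)⁻¹ * c i := fun i => by
      rw [← h1.2 i]
      field_simp
    have hb0 : ∀ i, b0 i = (r.val 0 0)⁻¹ * b i
        - (r.val 0 0)⁻¹ * r.val 0 1 * (r.val 1 1)⁻¹ * c i := fun i => by
      rw [← h1.1 i, ← h1.2 i]
      field_simp
      ring
    refine ⟨⟨(r.val 1 1, r.val 0 0, r.val 0 1), hγ, hα⟩, ?_⟩
    apply Subtype.ext
    apply Subtype.ext
    show ((l0 * (r.val 0 0)⁻¹,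
      m0 * (r.val 1 1)⁻¹ - l0 * (r.val 0 0)⁻¹ * r.val 0 1 * (r.val 1 1)⁻¹),
      (fun i => r.val 0 0 * b0 i + r.val 0 1 * c0 i, fun i => r.val 1 1 * c0 i))
      = ((l, m), (b, c))
    have hy2 : ∀ i, y i = (l0 * (r.val 0 0)⁻¹) * b i
        + (m0 * (r.val 1 1)⁻¹ - l0 * (r.val 0 0)⁻¹ * r.val 0 1 * (r.val 1 1)⁻¹) * c i :=
      fun i => by
        rw [hrep0 i, hb0 i, hc0 i]
        ring
    have hlm := lm_unique hind hy2 hrep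
    refine Prod.ext (Prod.ext hlm.1 hlm.2) (Prod.ext (funext h1.1) (funext h1.2))

lemma count_eq (y : Fin (n+1) → F) (hy : ∃ i, y i ≠ 0) (q : ℕ) (hq : Fintype.card F = q) :
    Nat.card (MsetT y) * ((q - 1) * ((q - 1) * q)) = (q * q - 1) * (q ^ (n+1) - q) := by
  classical
  haveI hfin1 : Finite (PairT y) := by unfold PairT; infer_instance
  haveI hfin2 : Finite (Submodule (ternions F) (Fin (n + 1) → ternions F)) :=
    Finite.of_injective SetLike.coe SetLike.coe_injective
  haveI hfin3 : Finite (MsetT y) := by unfold MsetT; infer_instance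
  letI : Fintype (PairT y) := Fintype.ofFinite _
  letI : Fintype (MsetT y) := Fintype.ofFinite _
  letI : ∀ m : MsetT y, Fintype {w : PairT y // fmap y w = m} := fun m => Fintype.ofFinite _
  have hfib : ∀ m : MsetT y, Nat.card {w : PairT y // fmap y w = m}
      = (q - 1) * ((q - 1) * q) := by
    intro m
    obtain ⟨w0, rfl⟩ := fmap_surj y m
    rw [← card_Trip q hq]
    exact (Nat.card_eq_of_bijective _ (gmap_bij y w0)).symm
  have h1 : Nat.card (PairT y) = ∑ m : MsetT y, Nat.card {w : PairT y // fmap y w = m} := by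
    rw [Nat.card_congr (Equiv.sigmaFiberEquiv (fmap y)).symm, Nat.card_eq_fintype_card,
      Fintype.card_sigma]
    apply Finset.sum_congr rfl
    intro m _
    rw [Nat.card_eq_fintype_card]
  rw [card_PairT y hy q hq] at h1
  rw [Finset.sum_congr rfl (fun m _ => hfib m), Finset.sum_const, Finset.card_univ,
    smul_eq_mul] at h1
  rw [← Nat.card_eq_fintype_card] at h1
  exact h1.symm

lemma arith (q N n : ℕ) (hq2 : 2 ≤ q)
    (h : N * ((q - 1) * ((q - 1) * q)) = (q * q - 1) * (q ^ (n+1) - q)) :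
    (q - 1) * N = (q + 1) * (q ^ n - 1) := by
  obtain ⟨a, rfl⟩ : ∃ a, q = a + 2 := ⟨q - 2, by omega⟩
  have hpow : (a+2)^n = ((a+2)^n - 1) + 1 := by
    have : 1 ≤ (a+2)^n := Nat.one_le_pow _ _ (by omega)
    omega
  set s := (a+2)^n - 1 with hs
  have h1 : (a+2)^(n+1) - (a+2) = (a+2) * s := by
    have h2 : (a+2)^(n+1) = (a+2)*s + (a+2) := by
      rw [pow_succ, hpow]
      ring
    omega
  have h2 : (a+2)*(a+2) - 1 = (a+1)*(a+3) := Nat.sub_eq_of_eq_add (by ring)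
  have h3 : a + 2 - 1 = a + 1 := rfl
  rw [h1, h2, h3] at h
  rw [h3]
  show (a+1) * N = (a + 2 + 1) * s
  apply Nat.eq_of_mul_eq_mul_left (show 0 < (a+1)*(a+2) by positivity)
  calc (a+1)*(a+2)*((a+1)*N) = N * ((a+1)*((a+1)*(a+2))) := by ring
    _ = (a+1)*(a+3)*((a+2)*s) := h
    _ = (a+1)*(a+2)*((a+2+1)*s) := by ring

/-- Over `F = GF(q)`, if the coordinates of `X ∈ R^{n+1}` generate as right ideal exactly
the Jacobson radical `rad R`, then the number `N₂` of non-unimodular free cyclic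
submodules containing `X` satisfies `(q - 1)·N₂ = (q + 1)·(q^n - 1)`. -/
theorem ternion_count_through_rad_vector (F : Type) [Field F] [Fintype F] (q n : ℕ)
    (hq : Fintype.card F = q) (hn : 1 ≤ n) (X : Fin (n + 1) → ternions F)
    (hX : (Submodule.span (ternions F)ᵐᵒᵖ (Set.range X) : Set (ternions F)) =
      {A : ternions F | A.val 0 0 = 0 ∧ A.val 1 1 = 0}) :
    (q - 1) *
        Nat.card {M : Submodule (ternions F) (Fin (n + 1) → ternions F) //
          (∃ Y : Fin (n + 1) → ternions F, M = Submodule.span (ternions F) {Y} ∧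
            Function.Injective (fun r : ternions F => r • Y) ∧
            ¬ ∃ φ : (Fin (n + 1) → ternions F) →ₗ[ternions F] ternions F, φ Y = 1) ∧
          X ∈ M} =
      (q + 1) * (q ^ n - 1) := by
  classical
  have hmem : ∀ i, (X i).val 0 0 = 0 ∧ (X i).val 1 1 = 0 := by
    intro i
    have h1 : X i ∈ (Submodule.span (ternions F)ᵐᵒᵖ (Set.range X) : Set (ternions F)) :=
      Submodule.subset_span ⟨i, rfl⟩
    rw [hX] at h1
    exact h1
  set y : Fin (n+1) → F := fun i => (X i).val 0 1 with hy_def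
  have hXT : X = T y (fun _ => 0) := by
    funext i
    rw [tern_eta (X i), (hmem i).1, (hmem i).2]
    rfl
  have hy : ∃ i, y i ≠ 0 := by
    by_contra h0
    push_neg at h0
    have hX0 : ∀ i, X i = 0 := fun i => by
      rw [tern_eta (X i), (hmem i).1, (hmem i).2]
      have := h0 i
      rw [hy_def] at this
      simp only at this
      rw [this, tern_zero]
    have h1 : (tern 0 1 0 : ternions F) ∈
        (Submodule.span (ternions F)ᵐᵒᵖ (Set.range X) : Set (ternions F)) := by
      rw [hX]
      exact ⟨by simp, by simp⟩
    have h2 : Set.range X ⊆ {0} := by rintro _ ⟨i, rfl⟩; exact hX0 i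
    have h3 := Submodule.span_mono (R := (ternions F)ᵐᵒᵖ) h2
    rw [Submodule.span_zero_singleton] at h3
    have h4 := h3 h1
    rw [Submodule.mem_bot] at h4
    have h5 := congrArg (fun r : ternions F => r.val 0 1) h4
    simp at h5
  rw [hXT]
  have hq2 : 2 ≤ q := hq ▸ Fintype.one_lt_card
  apply arith q _ n hq2
  exact count_eq y hy q hq
end
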